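/- Let R be a commutative ring, b1,…,b5 ∈ R, and let u ∈ R[[t]] be the unique formal power series with u = t^2·(1 + b1·u + b2·u^2 + b3·u^3 + b4·u^4 + b5·u^5). Then t·u′(t) = 2·u·(∑_{n≥0} D(n)·t^{2n}) in R[[t]], where u′ is the formal derivative of u and D(0) = 1. (This encodes the expansion x·dx/(2y) = (1 + ∑_{n≥1} D(n)·t^{2n})·dt of the differential ω2 at infinity, since x·dx/(2y) = (t/2)·du/u on the curve.) -/

import Mathlib

open PowerSeries Finset

/-- The power series `u` satisfies the curve equation at infinity:
`u = t² · (1 + b₁u + b₂u² + b₃u³ + b₄u⁴ + b₅u⁵)`. -/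
def SatisfiesCurveEqAtInfinity {R : Type*} [CommRing R] (b1 b2 b3 b4 b5 : R)
    (u : PowerSeries R) : Prop :=
  u = X ^ 2 * (1 + C b1 * u + C b2 * u ^ 2 + C b3 * u ^ 3
      + C b4 * u ^ 4 + C b5 * u ^ 5)

/-- `D n = ∑ (n!/(k₀!k₁!k₂!k₃!k₄!k₅!)) b₁^{k₁}b₂^{k₂}b₃^{k₃}b₄^{k₄}b₅^{k₅}`, the sum over
all `(k₀,…,k₅) ∈ ℕ⁶` with `k₀+k₁+k₂+k₃+k₄+k₅ = n` and `k₁+2k₂+3k₃+4k₄+5k₅ = n`. -/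
noncomputable def Dcoef {R : Type*} [CommRing R] (b1 b2 b3 b4 b5 : R) (n : ℕ) : R :=
  ∑ k ∈ (Fintype.piFinset fun _ : Fin 6 => Finset.range (n + 1)) |>.filter
      (fun k => (∑ i, k i) = n ∧ k 1 + 2 * k 2 + 3 * k 3 + 4 * k 4 + 5 * k 5 = n),
    (Nat.multinomial Finset.univ k : R) *
      (b1 ^ k 1 * b2 ^ k 2 * b3 ^ k 3 * b4 ^ k 4 * b5 ^ k 5)

/-- The even power series `∑_{n≥0} D(n)·t^{2n}`. -/
noncomputable def DSeries {R : Type*} [CommRing R] (b1 b2 b3 b4 b5 : R) : PowerSeries R :=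
  PowerSeries.mk fun m => if 2 ∣ m then Dcoef b1 b2 b3 b4 b5 (m / 2) else 0

namespace CurveAux

variable {A : Type*} [CommRing A]

/-- `Φ b v = 1 + b₁v + ... + b₅v⁵`. -/
noncomputable def Phi (b1 b2 b3 b4 b5 : A) (v : PowerSeries A) : PowerSeries A :=
  1 + C b1 * v + C b2 * v ^ 2 + C b3 * v ^ 3 + C b4 * v ^ 4 + C b5 * v ^ 5

lemma eq_zero_of_eq_X_sq_mul {P g : PowerSeries A} (h : g = X ^ 2 * P * g) : g = 0 := by
  ext n
  induction n using Nat.strong_induction_on with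
  | _ n ih =>
    rw [map_zero]
    calc coeff n g = coeff n (X ^ 2 * (P * g)) := by rw [← mul_assoc, ← h]
    _ = 0 := by
      rw [mul_comm, coeff_mul_X_pow']
      split_ifs with h2
      · rw [coeff_mul]
        apply Finset.sum_eq_zero
        rintro ⟨i, j⟩ hij
        have hj : j ≤ n - 2 := Finset.HasAntidiagonal.antidiagonal.snd_le hij
        have : j < n := lt_of_le_of_lt hj (by omega)
        simp [ih j this]
      · rfl

lemma unique {b1 b2 b3 b4 b5 : A} {u v : PowerSeries A}
    (hu : u = X ^ 2 * Phi b1 b2 b3 b4 b5 u) (hv : v = X ^ 2 * Phi b1 b2 b3 b4 b5 v) :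
    u = v := by
  have key : u - v = X ^ 2 * (C b1 + C b2 * (u + v) + C b3 * (u^2 + u*v + v^2)
      + C b4 * (u^3 + u^2*v + u*v^2 + v^3)
      + C b5 * (u^4 + u^3*v + u^2*v^2 + u*v^3 + v^4)) * (u - v) := by
    conv_lhs => rw [hu, hv]
    unfold Phi
    ring
  exact sub_eq_zero.mp (eq_zero_of_eq_X_sq_mul key)

end CurveAux

namespace CurveAux
variable {A : Type*} [CommRing A]

lemma trunc_phi_congr {b1 b2 b3 b4 b5 : A} {n : ℕ} {v w : PowerSeries A}
    (h : trunc n v = trunc n w) :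
    trunc n (Phi b1 b2 b3 b4 b5 v) = trunc n (Phi b1 b2 b3 b4 b5 w) := by
  have hpow : ∀ k : ℕ, trunc n (v ^ k) = trunc n (w ^ k) := by
    intro k
    rw [← trunc_trunc_pow, h, trunc_trunc_pow]
  have hmul : ∀ (a : A) (k : ℕ), trunc n (C a * v ^ k) = trunc n (C a * w ^ k) := by
    intro a k
    rw [← trunc_mul_trunc, hpow, trunc_mul_trunc]
  have hmul1 : ∀ a : A, trunc n (C a * v) = trunc n (C a * w) := fun a => by
    rw [← trunc_mul_trunc, h, trunc_mul_trunc]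
  unfold Phi
  simp only [map_add, hmul, hmul1]

end CurveAux

namespace CurveAux
variable {A : Type*} [CommRing A]

lemma trunc_eq_of_coeff {n : ℕ} {f g : PowerSeries A}
    (h : ∀ i < n, coeff i f = coeff i g) : trunc n f = trunc n g := by
  apply Polynomial.ext
  intro m
  rw [coeff_trunc, coeff_trunc]
  split_ifs with hm
  · exact h m hm
  · rfl

lemma coeff_trunc_eq {n m : ℕ} {f g : PowerSeries A} (h : trunc n f = trunc n g)
    (hm : m < n) : coeff m f = coeff m g := by
  have := congrArg (fun p => Polynomial.coeff p m) h
  simpa [coeff_trunc, hm] using this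

lemma step_congr {b1 b2 b3 b4 b5 : A} {n : ℕ} {v w : PowerSeries A}
    (h : trunc n v = trunc n w) :
    trunc (n+2) (X ^ 2 * Phi b1 b2 b3 b4 b5 v) = trunc (n+2) (X ^ 2 * Phi b1 b2 b3 b4 b5 w) := by
  have hphi := trunc_phi_congr (b1 := b1) (b2 := b2) (b3 := b3) (b4 := b4) (b5 := b5) h
  apply trunc_eq_of_coeff
  intro m hm
  rw [mul_comm, mul_comm (X^2), coeff_mul_X_pow', coeff_mul_X_pow']
  split_ifs with h2
  · exact coeff_trunc_eq hphi (by omega)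
  · rfl

lemma exists_solution (b1 b2 b3 b4 b5 : A) :
    ∃ u : PowerSeries A, u = X ^ 2 * Phi b1 b2 b3 b4 b5 u := by
  set T : PowerSeries A → PowerSeries A := fun v => X ^ 2 * Phi b1 b2 b3 b4 b5 v with hT
  set a : ℕ → PowerSeries A := fun k => T^[k] 0 with ha
  have hak : ∀ k, a (k+1) = T (a k) := by
    intro k
    simp [ha, Function.iterate_succ_apply']
  have stab : ∀ k, trunc (2*k) (a k) = trunc (2*k) (a (k+1)) := by
    intro k
    induction k with
    | zero => simp
    | succ k ih =>
      have := step_congr (b1 := b1) (b2 := b2) (b3 := b3) (b4 := b4) (b5 := b5) ih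
      rw [hak, hak]
      have h2 : 2*(k+1) = 2*k+2 := by ring
      rw [h2]
      exact this
  have stab2 : ∀ m k l, m < 2*k → k ≤ l → coeff m (a k) = coeff m (a l) := by
    intro m k l hmk hkl
    induction l with
    | zero => omega
    | succ l ih =>
      rcases Nat.lt_or_ge k (l+1) with hlt | hge
      · have hkl' : k ≤ l := by omega
        rw [ih hkl']
        exact coeff_trunc_eq (stab l) (by omega)
      · have : k = l + 1 := by omega
        rw [this]
  have stab3 : ∀ m k l, m < 2*k → m < 2*l → coeff m (a k) = coeff m (a l) := by
    intro m k l hk hl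
    rcases Nat.le_total k l with h | h
    · exact stab2 m k l hk h
    · exact (stab2 m l k hl h).symm
  refine ⟨PowerSeries.mk fun m => coeff m (a (m+1)), ?_⟩
  set u : PowerSeries A := PowerSeries.mk fun m => coeff m (a (m+1)) with hu
  have hcu : ∀ m k, m < 2*k → coeff m u = coeff m (a k) := by
    intro m k hmk
    rw [hu, coeff_mk]
    exact stab3 m (m+1) k (by omega) hmk
  ext m
  have h1 : trunc (m+1) u = trunc (m+1) (a (m+1)) :=
    trunc_eq_of_coeff fun i hi => hcu i (m+1) (by omega)
  have h2 := step_congr (b1 := b1) (b2 := b2) (b3 := b3) (b4 := b4) (b5 := b5) h1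
  calc coeff m u = coeff m (a (m+2)) := hcu m (m+2) (by omega)
  _ = coeff m (T (a (m+1))) := by rw [hak]
  _ = coeff m (T u) := (coeff_trunc_eq h2 (by omega)).symm

end CurveAux

namespace CurveAux
variable {A : Type*} [CommRing A] [Algebra ℚ A]

lemma nat_mul_cancel {j : ℕ} (hj : j ≠ 0) {a : A} (h : (j : A) * a = 0) : a = 0 := by
  have h1 : algebraMap ℚ A ((j : ℚ)⁻¹) * ((j : A) * a) = a := by
    rw [← map_natCast (algebraMap ℚ A) j, ← mul_assoc, ← map_mul,
      inv_mul_cancel₀ (by exact_mod_cast hj), map_one, one_mul]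
  rw [← h1, h, mul_zero]

lemma rescale_C' {B : Type*} [CommRing B] (a r : B) : rescale a (C r) = C r := by
  ext n
  rw [coeff_rescale]
  simp only [coeff_C]
  split_ifs with h
  · subst h; simp
  · simp

lemma even_coeff_odd {B : Type*} [CommRing B] [Algebra ℚ B] {f : PowerSeries B}
    (hf : rescale (-1) f = f) {n : ℕ} (hn : Odd n) : coeff n f = 0 := by
  have h1 : coeff n (rescale (-1) f) = coeff n f := by rw [hf]
  rw [coeff_rescale, hn.neg_one_pow, neg_one_mul] at h1
  have : (2 : B) * coeff n f = 0 := by linear_combination - h1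
  exact nat_mul_cancel (j := 2) (by norm_num) (by exact_mod_cast this)

variable {b1 b2 b3 b4 b5 : A} {u : PowerSeries A}

lemma coeff_zero_u (hu : u = X ^ 2 * Phi b1 b2 b3 b4 b5 u) : coeff 0 u = 0 := by
  rw [hu, mul_comm, coeff_mul_X_pow']
  simp

lemma constCoeff_phi (h0 : coeff 0 u = 0) :
    constantCoeff (Phi b1 b2 b3 b4 b5 u) = 1 := by
  have h0' : constantCoeff u = 0 := by rw [← coeff_zero_eq_constantCoeff_apply, h0]
  simp [Phi, map_add, map_mul, map_pow, h0']

lemma u_even (hu : u = X ^ 2 * Phi b1 b2 b3 b4 b5 u) : rescale (-1) u = u := by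
  apply unique ?_ hu
  conv_lhs => rw [hu]
  rw [map_mul, map_pow, rescale_neg_one_X]
  simp only [Phi, map_add, map_mul, map_pow, map_one, rescale_C']
  ring

lemma phi_even (hu : u = X ^ 2 * Phi b1 b2 b3 b4 b5 u) :
    rescale (-1) (Phi b1 b2 b3 b4 b5 u) = Phi b1 b2 b3 b4 b5 u := by
  simp only [Phi, map_add, map_mul, map_pow, map_one, rescale_C', u_even hu]

lemma ps_even (hu : u = X ^ 2 * Phi b1 b2 b3 b4 b5 u) {ps : PowerSeries A}
    (hps : Phi b1 b2 b3 b4 b5 u * ps = 1) : rescale (-1) ps = ps := by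
  have h1 : Phi b1 b2 b3 b4 b5 u * rescale (-1) ps = 1 := by
    rw [← phi_even hu, ← map_mul, hps, map_one]
  calc rescale (-1) ps = (Phi b1 b2 b3 b4 b5 u * ps) * rescale (-1) ps := by rw [hps, one_mul]
  _ = (Phi b1 b2 b3 b4 b5 u * rescale (-1) ps) * ps := by ring
  _ = ps := by rw [h1, one_mul]

lemma deriv_u (hu : u = X ^ 2 * Phi b1 b2 b3 b4 b5 u) :
    d⁄dX A u = 2 * X * Phi b1 b2 b3 b4 b5 u + X ^ 2 * d⁄dX A (Phi b1 b2 b3 b4 b5 u) := by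
  conv_lhs => rw [hu]
  rw [Derivation.leibniz, Derivation.leibniz_pow, derivative_X]
  simp only [smul_eq_mul]
  ring

end CurveAux

namespace CurveAux
set_option linter.unusedSectionVars false
variable {A : Type*} [CommRing A] [Algebra ℚ A]
variable {b1 b2 b3 b4 b5 : A} {u ps : PowerSeries A}

lemma cancel_phi_pow (hps : Phi b1 b2 b3 b4 b5 u * ps = 1) {k : ℕ} {f g : PowerSeries A}
    (h : f * (Phi b1 b2 b3 b4 b5 u) ^ k = g * (Phi b1 b2 b3 b4 b5 u) ^ k) : f = g := by
  have h1 : (Phi b1 b2 b3 b4 b5 u) ^ k * ps ^ k = 1 := by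
    rw [← mul_pow, hps, one_pow]
  calc f = f * ((Phi b1 b2 b3 b4 b5 u) ^ k * ps ^ k) := by rw [h1, mul_one]
  _ = (f * (Phi b1 b2 b3 b4 b5 u) ^ k) * ps ^ k := by ring
  _ = (g * (Phi b1 b2 b3 b4 b5 u) ^ k) * ps ^ k := by rw [h]
  _ = g * ((Phi b1 b2 b3 b4 b5 u) ^ k * ps ^ k) := by ring
  _ = g := by rw [h1, mul_one]

lemma rho_identity (hu : u = X ^ 2 * Phi b1 b2 b3 b4 b5 u)
    (hps : Phi b1 b2 b3 b4 b5 u * ps = 1) (i : ℕ) :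
    C ((i+1 : ℕ) : A) * (d⁄dX A u * ps ^ (i+2)) =
      2 * C ((i+1 : ℕ) : A) * X * ps ^ (i+1) - X ^ 2 * d⁄dX A (ps ^ (i+1)) := by
  set φ := Phi b1 b2 b3 b4 b5 u with hφ
  apply cancel_phi_pow hps (k := i + 2)
  have hinv : ∀ m : ℕ, ps ^ m * φ ^ m = 1 := fun m => by rw [← mul_pow, mul_comm ps φ, hps, one_pow]
  have hder : d⁄dX A (ps ^ (i+1)) * φ ^ (i+2) = - (C ((i+1 : ℕ) : A)) * d⁄dX A φ := by
    have h0 : d⁄dX A (ps ^ (i+1) * φ ^ (i+1)) = 0 := by rw [hinv]; simp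
    rw [Derivation.leibniz, smul_eq_mul, smul_eq_mul] at h0
    -- h0 : ps^(i+1) * d(φ^(i+1)) + φ^(i+1) * d(ps^(i+1)) = 0
    have hdφ : d⁄dX A (φ ^ (i+1)) = C ((i+1 : ℕ) : A) * φ ^ i * d⁄dX A φ := by
      rw [Derivation.leibniz_pow]
      simp only [smul_eq_mul, Nat.add_sub_cancel, nsmul_eq_mul]
      rw [map_natCast (C) (i+1)]
      ring
    have : d⁄dX A (ps ^ (i+1)) * φ ^ (i+2) =
        (ps ^ (i+1) * d⁄dX A (φ ^ (i+1)) + φ ^ (i+1) * d⁄dX A (ps ^ (i+1))) * φ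
        - ps ^ (i+1) * d⁄dX A (φ ^ (i+1)) * φ := by ring
    rw [this, h0, hdφ]
    have h2 : ps ^ (i+1) * (C ((i+1 : ℕ) : A) * φ ^ i * d⁄dX A φ) * φ
        = C ((i+1 : ℕ) : A) * d⁄dX A φ * (ps ^ (i+1) * φ ^ (i+1)) := by ring
    rw [h2, hinv]
    ring
  have hps2 : ps ^ (i+2) * φ ^ (i+2) = 1 := hinv (i+2)
  have hps1 : ps ^ (i+1) * φ ^ (i+2) = φ := by
    calc ps ^ (i+1) * φ ^ (i+2) = (ps ^ (i+1) * φ ^ (i+1)) * φ := by ring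
    _ = φ := by rw [hinv, one_mul]
  calc C ((i+1 : ℕ) : A) * (d⁄dX A u * ps ^ (i+2)) * φ ^ (i+2)
      = C ((i+1 : ℕ) : A) * d⁄dX A u * (ps ^ (i+2) * φ ^ (i+2)) := by ring
  _ = C ((i+1 : ℕ) : A) * (2 * X * φ + X ^ 2 * d⁄dX A φ) := by rw [hps2, mul_one, deriv_u hu]
  _ = 2 * C ((i+1 : ℕ) : A) * X * (ps ^ (i+1) * φ ^ (i+2))
      - X ^ 2 * (- (C ((i+1 : ℕ) : A)) * d⁄dX A φ) := by rw [hps1]; ring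
  _ = 2 * C ((i+1 : ℕ) : A) * X * ps ^ (i+1) * φ ^ (i+2)
      - X ^ 2 * (d⁄dX A (ps ^ (i+1)) * φ ^ (i+2)) := by rw [hder]; ring
  _ = (2 * C ((i+1 : ℕ) : A) * X * ps ^ (i+1) - X ^ 2 * d⁄dX A (ps ^ (i+1))) * φ ^ (i+2) := by
      ring

lemma rho_coeff (hu : u = X ^ 2 * Phi b1 b2 b3 b4 b5 u)
    (hps : Phi b1 b2 b3 b4 b5 u * ps = 1) (i : ℕ) :
    coeff (2*i+3) (d⁄dX A u * ps ^ (i+2)) = 0 := by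
  have h := congrArg (coeff (2*i+3)) (rho_identity hu hps i)
  rw [coeff_C_mul] at h
  have hr : coeff (2*i+3) (2 * C ((i+1 : ℕ) : A) * X * ps ^ (i+1) - X ^ 2 * d⁄dX A (ps ^ (i+1)))
      = 0 := by
    rw [map_sub]
    have e1 : 2 * C ((i+1 : ℕ) : A) * X * ps ^ (i+1) = X * (2 * C ((i+1 : ℕ) : A) * ps ^ (i+1)) := by
      ring
    have h23 : 2*i+3 = (2*i+2) + 1 := by ring
    rw [e1, h23, coeff_succ_X_mul, mul_comm (X ^ 2), coeff_mul_X_pow', if_pos (by omega)]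
    have h21 : 2*i+2+1-2 = 2*i+1 := by omega
    have e2 : 2 * C ((i+1 : ℕ) : A) * ps ^ (i+1) = C ((2*i+2 : ℕ) : A) * ps ^ (i+1) := by
      rw [show ((2*i+2 : ℕ) : A) = 2 * ((i+1 : ℕ) : A) by push_cast; ring, map_mul, map_ofNat]
    rw [h21, coeff_derivative, e2, coeff_C_mul]
    push_cast
    ring
  rw [hr] at h
  exact nat_mul_cancel (j := i+1) (by omega) h
end CurveAux

namespace CurveAux
set_option linter.unusedSectionVars false
variable {A : Type*} [CommRing A] [Algebra ℚ A]
variable {b1 b2 b3 b4 b5 : A} {u ps : PowerSeries A}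

lemma coeff_one_u (hu : u = X ^ 2 * Phi b1 b2 b3 b4 b5 u) : coeff 1 u = 0 := by
  rw [hu, mul_comm, coeff_mul_X_pow']
  simp

lemma coeff_two_u (hu : u = X ^ 2 * Phi b1 b2 b3 b4 b5 u) : coeff 2 u = 1 := by
  rw [hu, mul_comm, coeff_mul_X_pow', if_pos (by omega)]
  have : (2 : ℕ) - 2 = 0 := rfl
  rw [this, coeff_zero_eq_constantCoeff_apply, constCoeff_phi (coeff_zero_u hu)]

lemma coeff_zero_ps (hu : u = X ^ 2 * Phi b1 b2 b3 b4 b5 u)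
    (hps : Phi b1 b2 b3 b4 b5 u * ps = 1) : coeff 0 ps = 1 := by
  have h := congrArg (constantCoeff) hps
  rw [map_mul, constCoeff_phi (coeff_zero_u hu), one_mul, map_one] at h
  rw [coeff_zero_eq_constantCoeff_apply, h]

lemma rho_base (hu : u = X ^ 2 * Phi b1 b2 b3 b4 b5 u)
    (hps : Phi b1 b2 b3 b4 b5 u * ps = 1) : coeff 1 (d⁄dX A u * ps) = 2 := by
  rw [coeff_mul]
  rw [show Finset.HasAntidiagonal.antidiagonal 1 = {(0,1),(1,0)} by decide]
  rw [Finset.sum_insert (by decide), Finset.sum_singleton]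
  simp only
  rw [coeff_derivative, coeff_derivative, coeff_one_u hu, coeff_two_u hu, coeff_zero_ps hu hps]
  norm_num

lemma coeff_even_du_ps (hu : u = X ^ 2 * Phi b1 b2 b3 b4 b5 u)
    (hps : Phi b1 b2 b3 b4 b5 u * ps = 1) (n : ℕ) :
    coeff (2*n) (d⁄dX A u * ps) = 0 := by
  rw [coeff_mul]
  apply Finset.sum_eq_zero
  rintro ⟨i, j⟩ hij
  rw [Finset.HasAntidiagonal.mem_antidiagonal] at hij
  rcases Nat.even_or_odd i with he | ho
  · have : Odd (i + 1) := Even.add_one he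
    rw [coeff_derivative, even_coeff_odd (u_even hu) this, zero_mul, zero_mul]
  · have hj : Odd j := by
      rcases ho with ⟨a, rfl⟩
      exact ⟨n - a - 1, by omega⟩
    rw [even_coeff_odd (ps_even hu hps) hj, mul_zero]

end CurveAux

namespace CurveAux
set_option linter.unusedSectionVars false
variable {A : Type*} [CommRing A]

/-- The polynomial `1 + b₁w + b₂w² + b₃w³ + b₄w⁴ + b₅w⁵`. -/
noncomputable def ppoly (b1 b2 b3 b4 b5 : A) : Polynomial A :=
  ∑ i : Fin 6, Polynomial.C (![1, b1, b2, b3, b4, b5] i) * Polynomial.X ^ (i : ℕ)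

lemma ppoly_eq (b1 b2 b3 b4 b5 : A) :
    ppoly b1 b2 b3 b4 b5 = Polynomial.C 1 + Polynomial.C b1 * Polynomial.X
      + Polynomial.C b2 * Polynomial.X ^ 2 + Polynomial.C b3 * Polynomial.X ^ 3
      + Polynomial.C b4 * Polynomial.X ^ 4 + Polynomial.C b5 * Polynomial.X ^ 5 := by
  rw [ppoly, Fin.sum_univ_six]
  norm_num
  rfl

lemma aeval_ppoly (b1 b2 b3 b4 b5 : A) (v : PowerSeries A) :
    Polynomial.aeval v (ppoly b1 b2 b3 b4 b5) = Phi b1 b2 b3 b4 b5 v := by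
  have hC : ∀ a : A, (Polynomial.aeval v) (Polynomial.C a) = C a := fun a => by
    rw [Polynomial.aeval_C]
    rfl
  rw [ppoly_eq]
  simp only [map_add, map_mul, map_pow, Polynomial.aeval_X, hC, map_one]
  unfold Phi
  ring

lemma ppoly_natDegree_le (b1 b2 b3 b4 b5 : A) : (ppoly b1 b2 b3 b4 b5).natDegree ≤ 5 := by
  apply Polynomial.natDegree_sum_le_of_forall_le
  intro i _
  refine le_trans (Polynomial.natDegree_C_mul_le _ _) (le_trans (Polynomial.natDegree_X_pow_le _) ?_)
  have := i.isLt
  omega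

end CurveAux

namespace CurveAux
set_option linter.unusedSectionVars false
variable {A : Type*} [CommRing A] [Algebra ℚ A]
variable {b1 b2 b3 b4 b5 : A} {u ps : PowerSeries A}

lemma term_eval (hu : u = X ^ 2 * Phi b1 b2 b3 b4 b5 u)
    (hps : Phi b1 b2 b3 b4 b5 u * ps = 1) (n k : ℕ) :
    coeff (2*n+1) (X^(2*k) * (d⁄dX A u * ps^(n+1) * (Phi b1 b2 b3 b4 b5 u)^k))
      = if k = n then 2 else 0 := by
  set φ := Phi b1 b2 b3 b4 b5 u with hφ
  have hred : k ≤ n → ps^(n+1) * φ^k = ps^(n+1-k) := by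
    intro hk
    conv_lhs => rw [show n+1 = (n+1-k)+k by omega, pow_add, mul_assoc, ← mul_pow,
      mul_comm ps φ, hps, one_pow, mul_one]
  rcases lt_trichotomy k n with hlt | heq | hgt
  · rw [if_neg (by omega)]
    rw [mul_assoc (d⁄dX A u), hred (by omega), coeff_X_pow_mul', if_pos (by omega)]
    rw [show 2*n+1-2*k = 2*(n-k-1)+3 by omega, show n+1-k = (n-k-1)+2 by omega]
    exact rho_coeff hu hps (n-k-1)
  · subst heq
    rw [if_pos rfl, mul_assoc (d⁄dX A u), hred le_rfl, show k+1-k = 1 by omega, pow_one]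
    rw [show 2*k+1 = 1+2*k by omega, coeff_X_pow_mul]
    exact rho_base hu hps
  · rw [if_neg (by omega), coeff_X_pow_mul', if_neg (by omega)]

lemma key_chain (hu : u = X ^ 2 * Phi b1 b2 b3 b4 b5 u)
    (hps : Phi b1 b2 b3 b4 b5 u * ps = 1) (n : ℕ) :
    coeff (2*n+1) (d⁄dX A u * ps) = 2 * (ppoly b1 b2 b3 b4 b5 ^ n).coeff n := by
  set φ := Phi b1 b2 b3 b4 b5 u with hφ
  set p := ppoly b1 b2 b3 b4 b5 with hp
  have hdeg : (p^n).natDegree < 5*n+1 := by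
    have := Polynomial.natDegree_pow_le (p := p) (n := n)
    have := ppoly_natDegree_le b1 b2 b3 b4 b5
    calc (p^n).natDegree ≤ n * p.natDegree := Polynomial.natDegree_pow_le
    _ ≤ n * 5 := by
        exact Nat.mul_le_mul_left n (ppoly_natDegree_le b1 b2 b3 b4 b5)
    _ < 5*n+1 := by omega
  have hexp : φ^n = ∑ k ∈ Finset.range (5*n+1), (p^n).coeff k • u^k := by
    rw [hφ, ← aeval_ppoly, ← map_pow, Polynomial.aeval_eq_sum_range' hdeg]
  have h1 : ps^(n+1) * φ^n = ps := by
    calc ps^(n+1) * φ^n = ps * (ps^n * φ^n) := by ring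
    _ = ps := by rw [← mul_pow, mul_comm ps φ, hps, one_pow, mul_one]
  have hdups : d⁄dX A u * ps = d⁄dX A u * ps^(n+1) * φ^n := by
    rw [mul_assoc, h1]
  have huk : ∀ k : ℕ, u^k = X^(2*k) * φ^k := by
    intro k
    rw [hu, mul_pow, ← pow_mul]
  calc coeff (2*n+1) (d⁄dX A u * ps)
      = coeff (2*n+1) (∑ k ∈ Finset.range (5*n+1),
          (p^n).coeff k • (X^(2*k) * (d⁄dX A u * ps^(n+1) * φ^k))) := by
        rw [hdups, hexp, Finset.mul_sum,
          Finset.sum_congr rfl (fun k _ => show d⁄dX A u * ps^(n+1) * ((p^n).coeff k • u^k)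
            = (p^n).coeff k • (X^(2*k) * (d⁄dX A u * ps^(n+1) * φ^k)) from by
          rw [smul_eq_C_mul, smul_eq_C_mul, huk k]
          ring)]
  _ = ∑ k ∈ Finset.range (5*n+1),
        (p^n).coeff k * coeff (2*n+1) (X^(2*k) * (d⁄dX A u * ps^(n+1) * φ^k)) := by
        rw [map_sum, Finset.sum_congr rfl (fun k _ => by rw [smul_eq_C_mul, coeff_C_mul])]
  _ = ∑ k ∈ Finset.range (5*n+1), (p^n).coeff k * (if k = n then 2 else 0) := by
        rw [Finset.sum_congr rfl (fun k _ => by rw [term_eval hu hps])]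
  _ = 2 * (p^n).coeff n := by
        rw [Finset.sum_eq_single n]
        · rw [if_pos rfl, mul_comm]
        · intro b _ hb
          rw [if_neg hb, mul_zero]
        · intro hn
          exact absurd (Finset.mem_range.mpr (by omega)) hn

end CurveAux

namespace CurveAux
set_option linter.unusedSectionVars false

variable {A : Type*} [CommRing A]

lemma coeff_ppoly_pow (b1 b2 b3 b4 b5 : A) (n : ℕ) :
    (ppoly b1 b2 b3 b4 b5 ^ n).coeff n = Dcoef b1 b2 b3 b4 b5 n := by
  set bv : Fin 6 → A := ![1, b1, b2, b3, b4, b5] with hbv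
  rw [ppoly, Finset.sum_pow_eq_sum_piAntidiag]
  rw [Polynomial.finset_sum_coeff]
  have hterm : ∀ k : Fin 6 → ℕ, k ∈ Finset.piAntidiag Finset.univ n →
      ((Nat.multinomial Finset.univ k : Polynomial A) *
        ∏ i : Fin 6, (Polynomial.C (bv i) * Polynomial.X ^ (i : ℕ)) ^ k i).coeff n
      = if (∑ i : Fin 6, (i : ℕ) * k i) = n
          then (Nat.multinomial Finset.univ k : A) * ∏ i : Fin 6, bv i ^ k i else 0 := by
    intro k _
    have hprod : ∏ i : Fin 6, (Polynomial.C (bv i) * Polynomial.X ^ (i : ℕ)) ^ k i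
        = Polynomial.C (∏ i : Fin 6, bv i ^ k i) * Polynomial.X ^ (∑ i : Fin 6, (i : ℕ) * k i) := by
      calc ∏ i : Fin 6, (Polynomial.C (bv i) * Polynomial.X ^ (i:ℕ)) ^ k i
          = ∏ i : Fin 6, (Polynomial.C (bv i ^ k i) * Polynomial.X ^ ((i:ℕ) * k i)) := by
            refine Finset.prod_congr rfl fun i _ => ?_
            rw [mul_pow, ← map_pow, ← pow_mul]
      _ = (∏ i : Fin 6, Polynomial.C (bv i ^ k i)) * ∏ i : Fin 6, Polynomial.X ^ ((i:ℕ)*k i) :=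
            Finset.prod_mul_distrib
      _ = Polynomial.C (∏ i : Fin 6, bv i ^ k i) * Polynomial.X ^ (∑ i : Fin 6, (i:ℕ)*k i) := by
            rw [← map_prod, Finset.prod_pow_eq_pow_sum]
    rw [hprod, show (Nat.multinomial Finset.univ k : Polynomial A)
        = Polynomial.C ((Nat.multinomial Finset.univ k : A)) by
      rw [← Polynomial.C_eq_natCast, map_natCast (Polynomial.C)], ← mul_assoc, ← map_mul,
      Polynomial.coeff_C_mul, Polynomial.coeff_X_pow]
    rcases eq_or_ne (∑ i : Fin 6, (i:ℕ)*k i) n with h | h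
    · rw [if_pos h, h, if_pos rfl, mul_one]
    · rw [if_neg h, if_neg (Ne.symm h), mul_zero]
  rw [Finset.sum_congr rfl hterm, Finset.sum_ite, Finset.sum_const_zero, add_zero]
  unfold Dcoef
  apply Finset.sum_nbij' (fun k => k) (fun k => k)
  · intro k hk
    simp only [Finset.mem_filter, Finset.mem_piAntidiag] at hk ⊢
    obtain ⟨⟨hsum, -⟩, hwt⟩ := hk
    refine ⟨?_, hsum, ?_⟩
    · rw [Fintype.mem_piFinset]
      intro i
      rw [Finset.mem_range]
      have : k i ≤ Finset.univ.sum k := Finset.single_le_sum (fun j _ => Nat.zero_le _)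
        (Finset.mem_univ i)
      omega
    · rw [Fin.sum_univ_six] at hwt
      rw [show ((0:Fin 6):ℕ) = 0 from rfl, show ((1:Fin 6):ℕ) = 1 from rfl,
        show ((2:Fin 6):ℕ) = 2 from rfl, show ((3:Fin 6):ℕ) = 3 from rfl,
        show ((4:Fin 6):ℕ) = 4 from rfl, show ((5:Fin 6):ℕ) = 5 from rfl] at hwt
      omega
  · intro k hk
    simp only [Finset.mem_filter, Finset.mem_piAntidiag] at hk ⊢
    obtain ⟨-, hsum, hwt⟩ := hk
    refine ⟨⟨hsum, fun i _ => Finset.mem_univ i⟩, ?_⟩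
    rw [Fin.sum_univ_six]
    rw [show ((0:Fin 6):ℕ) = 0 from rfl, show ((1:Fin 6):ℕ) = 1 from rfl,
      show ((2:Fin 6):ℕ) = 2 from rfl, show ((3:Fin 6):ℕ) = 3 from rfl,
      show ((4:Fin 6):ℕ) = 4 from rfl, show ((5:Fin 6):ℕ) = 5 from rfl]
    omega
  · intro k _; rfl
  · intro k _; rfl
  · intro k _
    congr 1
    rw [Fin.prod_univ_six]
    rw [show bv 0 = 1 from rfl, show bv 1 = b1 from rfl, show bv 2 = b2 from rfl,
      show bv 3 = b3 from rfl, show bv 4 = b4 from rfl, show bv 5 = b5 from rfl, one_pow, one_mul]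

end CurveAux

namespace CurveAux
set_option linter.unusedSectionVars false

variable {A : Type*} [CommRing A] [Algebra ℚ A]
variable {b1 b2 b3 b4 b5 : A} {u : PowerSeries A}

lemma main_Q (hu : u = X ^ 2 * Phi b1 b2 b3 b4 b5 u) :
    X * d⁄dX A u = 2 * u * DSeries b1 b2 b3 b4 b5 := by
  set φ := Phi b1 b2 b3 b4 b5 u with hφ
  have hunit : constantCoeff φ = ((1 : Aˣ) : A) := by
    rw [Units.val_one]; exact constCoeff_phi (coeff_zero_u hu)
  set ps := invOfUnit φ 1 with hpsdef
  have hps : φ * ps = 1 := mul_invOfUnit φ 1 hunit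
  have hkey : d⁄dX A u * ps = 2 * X * DSeries b1 b2 b3 b4 b5 := by
    ext m
    rcases Nat.even_or_odd m with ⟨n, rfl⟩ | ⟨n, rfl⟩
    · rw [show n + n = 2*n by ring, coeff_even_du_ps hu hps n]
      rw [show 2 * X * DSeries b1 b2 b3 b4 b5 = X * (2 * DSeries b1 b2 b3 b4 b5) by ring]
      rcases Nat.eq_zero_or_pos n with rfl | hn
      · rw [show 2*0 = 0 by rfl]
        have : constantCoeff (X * (2 * DSeries b1 b2 b3 b4 b5)) = 0 := by
          rw [map_mul, constantCoeff_X, zero_mul]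
        rw [coeff_zero_eq_constantCoeff_apply, this]
      · rw [show 2*n = (2*n-1)+1 by omega, coeff_succ_X_mul]
        have hodd : ¬ (2 ∣ (2*n-1)) := by omega
        rw [show (2 : PowerSeries A) * DSeries b1 b2 b3 b4 b5
            = C 2 * DSeries b1 b2 b3 b4 b5 by rw [map_ofNat], coeff_C_mul]
        rw [DSeries, coeff_mk, if_neg hodd, mul_zero]
    · rw [key_chain hu hps n, coeff_ppoly_pow]
      rw [show 2 * X * DSeries b1 b2 b3 b4 b5 = X * (2 * DSeries b1 b2 b3 b4 b5) by ring]
      rw [coeff_succ_X_mul]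
      rw [show (2 : PowerSeries A) * DSeries b1 b2 b3 b4 b5
          = C 2 * DSeries b1 b2 b3 b4 b5 by rw [map_ofNat], coeff_C_mul]
      rw [DSeries, coeff_mk, if_pos ⟨n, by ring⟩, show 2*n/2 = n by omega]
  calc X * d⁄dX A u = (d⁄dX A u * ps) * (X * φ) := by
        rw [show (d⁄dX A u * ps) * (X * φ) = X * d⁄dX A u * (φ * ps) by ring, hps, mul_one]
  _ = 2 * X * DSeries b1 b2 b3 b4 b5 * (X * φ) := by rw [hkey]
  _ = 2 * (X^2 * φ) * DSeries b1 b2 b3 b4 b5 := by ring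
  _ = 2 * u * DSeries b1 b2 b3 b4 b5 := by rw [← hu]

end CurveAux

namespace CurveAux
set_option linter.unusedSectionVars false

variable {A B : Type*} [CommRing A] [CommRing B] (f : A →+* B)

lemma map_derivative (g : PowerSeries A) :
    PowerSeries.map f (d⁄dX A g) = d⁄dX B (PowerSeries.map f g) := by
  ext n
  rw [coeff_map, coeff_derivative, coeff_derivative, coeff_map, map_mul, map_add, map_natCast,
    map_one]

lemma map_Phi (b1 b2 b3 b4 b5 : A) (v : PowerSeries A) :
    PowerSeries.map f (Phi b1 b2 b3 b4 b5 v)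
      = Phi (f b1) (f b2) (f b3) (f b4) (f b5) (PowerSeries.map f v) := by
  simp only [Phi, map_add, map_mul, map_pow, map_one, PowerSeries.map_C]

lemma map_Dcoef (b1 b2 b3 b4 b5 : A) (n : ℕ) :
    f (Dcoef b1 b2 b3 b4 b5 n) = Dcoef (f b1) (f b2) (f b3) (f b4) (f b5) n := by
  unfold Dcoef
  rw [map_sum]
  refine Finset.sum_congr rfl fun k _ => ?_
  rw [map_mul, map_natCast, map_mul, map_mul, map_mul, map_mul, map_pow, map_pow, map_pow,
    map_pow, map_pow]

lemma map_DSeries (b1 b2 b3 b4 b5 : A) :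
    PowerSeries.map f (DSeries b1 b2 b3 b4 b5)
      = DSeries (f b1) (f b2) (f b3) (f b4) (f b5) := by
  ext n
  rw [coeff_map, DSeries, DSeries, coeff_mk, coeff_mk]
  split_ifs with h
  · exact map_Dcoef f b1 b2 b3 b4 b5 (n/2)
  · exact map_zero f

lemma powerSeries_map_injective (hf : Function.Injective f) :
    Function.Injective (PowerSeries.map f) := by
  intro g h hgh
  ext n
  apply hf
  rw [← coeff_map, ← coeff_map, hgh]

lemma Dcoef_zero {R : Type*} [CommRing R] (b1 b2 b3 b4 b5 : R) :
    Dcoef b1 b2 b3 b4 b5 0 = 1 := by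
  unfold Dcoef
  have hset : ((Fintype.piFinset fun _ : Fin 6 => Finset.range (0 + 1)) |>.filter
      (fun k => (∑ i, k i) = 0 ∧ k 1 + 2 * k 2 + 3 * k 3 + 4 * k 4 + 5 * k 5 = 0))
      = {fun _ => 0} := by
    apply Finset.ext
    intro k
    simp only [Finset.mem_filter, Fintype.mem_piFinset, Finset.mem_range, Finset.mem_singleton]
    constructor
    · rintro ⟨hk, -, -⟩
      funext i
      have := hk i
      omega
    · rintro rfl
      exact ⟨fun i => by simp, by simp, by simp⟩
  rw [hset, Finset.sum_singleton]
  simp [Nat.multinomial]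

/-- Main theorem over a general commutative ring, by transfer from `ℚ`-algebras. -/
theorem main_general {R : Type*} [CommRing R] (b1 b2 b3 b4 b5 : R) (u : PowerSeries R)
    (hu : u = X ^ 2 * Phi b1 b2 b3 b4 b5 u) :
    X * d⁄dX R u = 2 * u * DSeries b1 b2 b3 b4 b5 := by
  classical
  set A0 := MvPolynomial (Fin 5) ℤ
  set AQ := MvPolynomial (Fin 5) ℚ
  set x : Fin 5 → A0 := MvPolynomial.X
  obtain ⟨u0, hu0⟩ := exists_solution (A := A0) (x 0) (x 1) (x 2) (x 3) (x 4)
  set ι : A0 →+* AQ := (MvPolynomial.map (Int.castRingHom ℚ) : A0 →+* AQ)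
  have hι : Function.Injective ι :=
    MvPolynomial.map_injective (Int.castRingHom ℚ) Int.cast_injective
  set uQ := PowerSeries.map ι u0 with huQdef
  have huQ : uQ = X ^ 2 * Phi (ι (x 0)) (ι (x 1)) (ι (x 2)) (ι (x 3)) (ι (x 4)) uQ := by
    rw [huQdef]
    conv_lhs => rw [hu0]
    rw [map_mul, map_pow, PowerSeries.map_X, map_Phi]
  have hQ := main_Q huQ
  have h0 : X * d⁄dX A0 u0 = 2 * u0 * DSeries (x 0) (x 1) (x 2) (x 3) (x 4) := by
    apply powerSeries_map_injective ι hι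
    rw [map_mul, map_mul, map_mul, PowerSeries.map_X, map_derivative, map_DSeries, ← huQdef]
    rw [hQ, map_ofNat]
  set ψ : A0 →+* R := (MvPolynomial.eval₂Hom (Int.castRingHom R)
    (fun i => ![b1, b2, b3, b4, b5] i) : A0 →+* R)
  have hψx : ∀ i, ψ (x i) = ![b1, b2, b3, b4, b5] i := fun i => by
    rw [MvPolynomial.eval₂Hom_X']
  have humap : PowerSeries.map ψ u0 = u := by
    apply unique ?_ hu
    conv_lhs => rw [hu0]
    rw [map_mul, map_pow, PowerSeries.map_X, map_Phi]
    rw [hψx 0, hψx 1, hψx 2, hψx 3, hψx 4]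
    rfl
  have := congrArg (PowerSeries.map ψ) h0
  rw [map_mul, map_mul, map_mul, PowerSeries.map_X, map_derivative, map_DSeries, humap] at this
  rw [hψx 0, hψx 1, hψx 2, hψx 3, hψx 4, map_ofNat] at this
  exact this

end CurveAux

theorem stmt2 {R : Type*} [CommRing R] (b1 b2 b3 b4 b5 : R) (u : PowerSeries R)
    (hu : SatisfiesCurveEqAtInfinity b1 b2 b3 b4 b5 u) :
    X * derivative R u = 2 * u * DSeries b1 b2 b3 b4 b5 ∧
    Dcoef b1 b2 b3 b4 b5 0 = 1 := by
  have hu' : u = X ^ 2 * CurveAux.Phi b1 b2 b3 b4 b5 u := hu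
  exact ⟨CurveAux.main_general b1 b2 b3 b4 b5 u hu', CurveAux.Dcoef_zero b1 b2 b3 b4 b5⟩
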